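/- arXiv:1106.2348 — 6 statements merged into one kernel-verified Lean document; each statement's English description precedes it below -/
import Mathlib

section
/- Let H = P_n^c be the antipath on n vertices and let k ≥ 1. Then the k-th power of its edge ideal is given by I(H)^k = ( x_{i_1} x_{i_2} ⋯ x_{i_k} · x_{j_1} x_{j_2} ⋯ x_{j_k} : i_1 ≤ i_2 ≤ ⋯ ≤ i_k ≤ j_1 ≤ j_2 ≤ ⋯ ≤ j_k and i_r + 2 ≤ j_r for all 1 ≤ r ≤ k ), i.e., I(H)^k equals the ideal generated by all monomials of degree 2k of this form. -/
open MvPolynomial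

/-- The edge ideal of the antipath `P_n^c`: the simple graph on vertices `{1,…,n}`
(realized as `Fin n`) whose edges are the pairs `{i,j}` with `i + 2 ≤ j`. -/
noncomputable def antipathIdeal (K : Type*) [Field K] (n : ℕ) :
    Ideal (MvPolynomial (Fin n) K) :=
  Ideal.span { m | ∃ i j : Fin n, (i : ℕ) + 2 ≤ (j : ℕ) ∧ m = X i * X j }

open Finset Pointwise

universe v

/-- Sorting lemma: the endpoints of any `k` "antipath edges" can be re-paired into a
sorted configuration with the same multiset of endpoints (hence the same product). -/
lemma antipath_sort {n k : ℕ} (i j : Fin k → Fin n)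
    (hij : ∀ r, (i r : ℕ) + 2 ≤ (j r : ℕ)) :
    ∃ i' j' : Fin k → Fin n, Monotone i' ∧ Monotone j' ∧ (∀ r s : Fin k, i' r ≤ j' s) ∧
      (∀ r : Fin k, (i' r : ℕ) + 2 ≤ (j' r : ℕ)) ∧
      ∀ {M : Type v} [CommMonoid M] (X : Fin n → M),
        (∏ r, X (i' r)) * ∏ r, X (j' r) = (∏ r, X (i r)) * ∏ r, X (j r) := by
  set F : Fin (k + k) → Fin n := Fin.append i j with hF
  set σ : Equiv.Perm (Fin (k + k)) := Tuple.sort F with hσ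
  have hg : Monotone (F ∘ σ) := Tuple.monotone_sort F
  refine ⟨fun r => F (σ (Fin.castAdd k r)), fun r => F (σ (Fin.natAdd k r)), ?_, ?_, ?_, ?_, ?_⟩
  · intro a b hab
    exact hg (by rw [Fin.le_def]; simpa only [Fin.coe_castAdd] using Fin.le_def.mp hab)
  · intro a b hab
    exact hg (by rw [Fin.le_def]; simpa only [Fin.coe_natAdd, add_le_add_iff_left] using Fin.le_def.mp hab)
  · intro r s
    refine hg ?_
    rw [Fin.le_def]
    simp only [Fin.coe_castAdd, Fin.coe_natAdd]
    omega
  · -- key combinatorial inequality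
    intro r
    by_contra hcon
    push_neg at hcon
    -- window of positions from r to k + r
    set W : Finset (Fin (k + k)) := Finset.Icc (Fin.castAdd k r) (Fin.natAdd k r) with hW
    have hWcard : W.card = k + 1 := by
      rw [hW, Fin.card_Icc]
      simp only [Fin.coe_natAdd, Fin.coe_castAdd]
      omega
    -- image under σ
    have hcard : (W.image σ).card = k + 1 := by
      rw [Finset.card_image_of_injective _ σ.injective, hWcard]
    -- edge index map
    set e : Fin (k + k) → Fin k := fun p => Sum.elim id id (finSumFinEquiv.symm p) with he
    have hpig : ∃ p ∈ W.image σ, ∃ q ∈ W.image σ, p ≠ q ∧ e p = e q := by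
      apply Finset.exists_ne_map_eq_of_card_lt_of_maps_to
      · rw [hcard, Finset.card_univ, Fintype.card_fin]; omega
      · intro x _; exact Finset.mem_univ _
    obtain ⟨p, hp, q, hq, hpq, hepq⟩ := hpig
    -- values of F on the window are within [v, v+1]
    have hval : ∀ x ∈ W.image σ, (F (σ (Fin.castAdd k r)) : ℕ) ≤ F x ∧
        (F x : ℕ) ≤ F (σ (Fin.castAdd k r)) + 1 := by
      intro x hx
      obtain ⟨u, hu, rfl⟩ := Finset.mem_image.mp hx
      rw [hW, Finset.mem_Icc] at hu
      constructor
      · exact hg hu.1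
      · calc (F (σ u) : ℕ) ≤ F (σ (Fin.natAdd k r)) := hg hu.2
          _ ≤ F (σ (Fin.castAdd k r)) + 1 := by omega
    -- from equal edge indices, p and q are the two endpoints of an edge t
    have key : ∃ t : Fin k, ({p, q} : Finset (Fin (k+k))) =
        {Fin.castAdd k t, Fin.natAdd k t} := by
      rcases hsp : finSumFinEquiv.symm p with a | a <;> rcases hsq : finSumFinEquiv.symm q with b | b
      · exfalso; apply hpq
        have : a = b := by simpa [he, hsp, hsq] using hepq
        have := congrArg finSumFinEquiv (hsp.trans (this ▸ hsq.symm))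
        simpa using this
      · have hab : a = b := by simpa [he, hsp, hsq] using hepq
        refine ⟨a, ?_⟩
        have hp' : p = Fin.castAdd k a := by
          have := congrArg finSumFinEquiv hsp; simpa using this
        have hq' : q = Fin.natAdd k a := by
          have := congrArg finSumFinEquiv hsq; simp [← hab] at this; simpa using this
        rw [hp', hq']
      · have hab : a = b := by simpa [he, hsp, hsq] using hepq
        refine ⟨b, ?_⟩
        have hp' : p = Fin.natAdd k b := by
          have := congrArg finSumFinEquiv hsp; simp [hab] at this; simpa using this
        have hq' : q = Fin.castAdd k b := by
          have := congrArg finSumFinEquiv hsq; simpa using this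
        rw [hp', hq', Finset.pair_comm]
      · exfalso; apply hpq
        have : a = b := by simpa [he, hsp, hsq] using hepq
        have := congrArg finSumFinEquiv (hsp.trans (this ▸ hsq.symm))
        simpa using this
    obtain ⟨t, ht⟩ := key
    -- both endpoints lie in the window image, yet their F-values differ by ≥ 2
    have hsub : ({Fin.castAdd k t, Fin.natAdd k t} : Finset (Fin (k+k))) ⊆ W.image σ := by
      rw [← ht]
      rw [Finset.insert_subset_iff, Finset.singleton_subset_iff]
      exact ⟨hp, hq⟩
    have hmem1 := hval _ (hsub (Finset.mem_insert_self _ _))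
    have hmem2 := hval _ (hsub (Finset.mem_insert_of_mem (Finset.mem_singleton_self _)))
    have hFl : F (Fin.castAdd k t) = i t := Fin.append_left i j t
    have hFr : F (Fin.natAdd k t) = j t := Fin.append_right i j t
    have := hij t
    rw [hFl] at hmem1
    rw [hFr] at hmem2
    omega
  · intro M _ X
    have h1 := (Fin.prod_univ_add (fun u => X (F (σ u)))).symm
    have h2 := Equiv.prod_comp σ (fun u => X (F u))
    have h3 := Fin.prod_univ_add (fun u => X (F u))
    rw [h1, h2, h3]
    congr 1
    · exact Finset.prod_congr rfl fun r _ => by rw [hF, Fin.append_left]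
    · exact Finset.prod_congr rfl fun r _ => by rw [hF, Fin.append_right]

/-- For `k ≥ 1`, the `k`-th power of the edge ideal of the antipath is
generated by the monomials `x_{i_1} ⋯ x_{i_k} x_{j_1} ⋯ x_{j_k}` with
`i_1 ≤ ⋯ ≤ i_k ≤ j_1 ≤ ⋯ ≤ j_k` and `i_r + 2 ≤ j_r` for all `r`. -/
theorem antipath_power_eq_span (K : Type*) [Field K] (n k : ℕ) (hk : 1 ≤ k) :
    antipathIdeal K n ^ k =
      Ideal.span { m : MvPolynomial (Fin n) K | ∃ i j : Fin k → Fin n,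
        Monotone i ∧ Monotone j ∧ (∀ r s : Fin k, i r ≤ j s) ∧
        (∀ r : Fin k, (i r : ℕ) + 2 ≤ (j r : ℕ)) ∧
        m = (∏ r, X (i r)) * ∏ r, X (j r) } := by
  apply le_antisymm
  · -- I^k ⊆ span of sorted monomials
    have hpow : antipathIdeal K n ^ k =
        Ideal.span (({ m | ∃ i j : Fin n, (i : ℕ) + 2 ≤ (j : ℕ) ∧
          m = X i * X j } : Set (MvPolynomial (Fin n) K)) ^ k) :=
      Submodule.span_pow _ k
    rw [hpow, Ideal.span_le]
    rintro m hm
    rw [Set.mem_pow] at hm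
    obtain ⟨f, hf⟩ := hm
    choose a b hab hfe using fun r => (f r).2
    obtain ⟨i', j', h1, h2, h3, h4, h5⟩ := antipath_sort a b hab
    refine Ideal.subset_span ⟨i', j', h1, h2, h3, h4, ?_⟩
    rw [h5 X, ← hf, List.prod_ofFn, ← Finset.prod_mul_distrib]
    exact Finset.prod_congr rfl fun r _ => hfe r
  · rw [Ideal.span_le]
    rintro m ⟨i, j, _, _, _, hij, rfl⟩
    rw [SetLike.mem_coe, ← Finset.prod_mul_distrib]
    have hpow : antipathIdeal K n ^ k = ∏ _r : Fin k, antipathIdeal K n := by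
      rw [Finset.prod_const, Finset.card_univ, Fintype.card_fin]
    rw [hpow]
    exact Ideal.prod_mem_prod fun r _ => Ideal.subset_span ⟨i r, j r, hij r, rfl⟩
end

section
/- Let G be a finite simple graph on vertex set {1,…,n} and suppose the monomial m ∈ k[x_1,…,x_n] is a product of k edges of G, i.e. m = ∏_{r=1}^k x_{u_r} x_{v_r} where each {u_r, v_r} is an edge of G. Then every monomial of degree k + 1 that divides m is divisible by x_u x_v for some edge {u,v} of G. -/
open MvPolynomial

/-- If a monomial `m` is a product of `k` edges of a finite simple graph `G`
(on vertex set `Fin n`), then every monomial of degree `k + 1` dividing `m` is divisible by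
`x_u x_v` for some edge `{u,v}` of `G`. -/
theorem edge_in_degree_succ_divisor (K : Type*) [Field K] (n k : ℕ)
    (G : SimpleGraph (Fin n)) (u v : Fin k → Fin n)
    (huv : ∀ r : Fin k, G.Adj (u r) (v r))
    (d : Fin n →₀ ℕ) (hd : (d.sum fun _ e => e) = k + 1)
    (hdvd : (monomial d (1 : K)) ∣ ∏ r, (X (u r) * X (v r))) :
    ∃ a b : Fin n, G.Adj a b ∧
      (X a * X b : MvPolynomial (Fin n) K) ∣ monomial d (1 : K) := by
  classical
  set e : Fin k → (Fin n →₀ ℕ) :=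
    fun r => Finsupp.single (u r) 1 + Finsupp.single (v r) 1 with he
  set D : Fin n →₀ ℕ := ∑ r, e r with hD
  have hprod : (∏ r, (X (u r) * X (v r)) : MvPolynomial (Fin n) K) = monomial D 1 := by
    rw [hD]
    induction (Finset.univ : Finset (Fin k)) using Finset.induction with
    | empty => simp
    | insert _ _ hx ih =>
        rw [Finset.prod_insert hx, Finset.sum_insert hx, ih, X, X, monomial_mul,
          monomial_mul, one_mul, one_mul, he]
  rw [hprod, monomial_dvd_monomial] at hdvd
  have hle : d ≤ D := by
    rcases hdvd.1 with h | h
    · exact absurd h one_ne_zero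
    · exact h
  by_contra hcon
  push_neg at hcon
  have key : ∀ r : Fin k, ¬(u r ∈ d.support ∧ v r ∈ d.support) := by
    intro r ⟨h1, h2⟩
    refine hcon (u r) (v r) (huv r) ?_
    rw [X, X, monomial_mul, one_mul, monomial_dvd_monomial]
    refine ⟨Or.inr ?_, dvd_refl _⟩
    intro i
    rw [Finsupp.add_apply, Finsupp.single_apply, Finsupp.single_apply]
    rcases eq_or_ne (u r) i with rfl | h
    · rw [if_pos rfl, if_neg (huv r).ne']
      simpa using Nat.one_le_iff_ne_zero.mpr (Finsupp.mem_support_iff.mp h1)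
    · rw [if_neg h]
      rcases eq_or_ne (v r) i with rfl | h'
      · rw [if_pos rfl]
        simpa using Nat.one_le_iff_ne_zero.mpr (Finsupp.mem_support_iff.mp h2)
      · simp [if_neg h']
  have h1 : (k + 1 : ℕ) ≤ ∑ i ∈ d.support, D i := by
    calc (k + 1 : ℕ) = ∑ i ∈ d.support, d i := by rw [← hd]; rfl
    _ ≤ ∑ i ∈ d.support, D i := Finset.sum_le_sum fun i _ => hle i
  have h2 : ∑ i ∈ d.support, D i ≤ k := by
    have hswap : ∑ i ∈ d.support, D i = ∑ r : Fin k, ∑ i ∈ d.support, e r i := by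
      rw [hD]
      simp only [Finsupp.finset_sum_apply]
      rw [Finset.sum_comm]
    rw [hswap]
    calc ∑ r : Fin k, ∑ i ∈ d.support, e r i
        ≤ ∑ _r : Fin k, 1 := by
          refine Finset.sum_le_sum fun r _ => ?_
          have hs : ∑ i ∈ d.support, e r i =
              (if u r ∈ d.support then 1 else 0) +
              (if v r ∈ d.support then 1 else 0) := by
            simp only [he, Finsupp.add_apply, Finsupp.single_apply, Finset.sum_add_distrib]
            rw [Finset.sum_ite_eq d.support (u r) fun _ => 1,
              Finset.sum_ite_eq d.support (v r) fun _ => 1]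
          rw [hs]
          rcases Classical.em (u r ∈ d.support) with h | h
          · rw [if_pos h, if_neg (fun h' => key r ⟨h, h'⟩)]
          · rw [if_neg h]
            split <;> simp
      _ = k := by simp
  omega
end

section
/- For every n ≥ 1 and every k ≥ 1, the power I(P_n^c)^k of the edge ideal of the antipath has linear quotients; more precisely, listing the minimal monomial generators of I(P_n^c)^k in decreasing lexicographic order (for the variable order x_1 > x_2 > ⋯ > x_n) gives a linear quotients ordering. -/
open MvPolynomial

/-- `d` is (the exponent vector of) a minimal monomial generator of the monomial ideal `I`:
the monomial `x^d` lies in `I` and no proper monomial divisor of it lies in `I`. -/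
def IsMinGen {K : Type*} [Field K] {σ : Type*} (I : Ideal (MvPolynomial σ K))
    (d : σ →₀ ℕ) : Prop :=
  monomial d (1 : K) ∈ I ∧ ∀ d' : σ →₀ ℕ, d' ≤ d → monomial d' (1 : K) ∈ I → d' = d

namespace Antipath

variable {n : ℕ}

/-- An edge exponent vector of the antipath. -/
def IsEdge (n : ℕ) (d : Fin n →₀ ℕ) : Prop :=
  ∃ i j : Fin n, (i : ℕ) + 2 ≤ (j : ℕ) ∧ d = Finsupp.single i 1 + Finsupp.single j 1

/-- `v` is a sum of `k` edge vectors. -/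
def SumE (n k : ℕ) (v : Fin n →₀ ℕ) : Prop :=
  ∃ l : Multiset (Fin n →₀ ℕ), Multiset.card l = k ∧ (∀ d ∈ l, IsEdge n d) ∧ v = l.sum

/-- Value of `v` at a natural index, `0` out of range. -/
def natV (v : Fin n →₀ ℕ) (c : ℕ) : ℕ := if h : c < n then v ⟨c, h⟩ else 0

def degF (v : Fin n →₀ ℕ) : ℕ := ∑ i, v i

lemma natV_add (a b : Fin n →₀ ℕ) (c : ℕ) : natV (a + b) c = natV a c + natV b c := by
  unfold natV; split <;> simp

lemma natV_single (x : Fin n) (c : ℕ) :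
    natV (Finsupp.single x 1) c = if (x : ℕ) = c then 1 else 0 := by
  unfold natV
  split
  · rename_i h
    rw [Finsupp.single_apply]
    congr 1
    simp [Fin.ext_iff, eq_comm]
  · rename_i h
    have hx := x.isLt
    have : (x : ℕ) ≠ c := by omega
    simp [this]

lemma degF_add (a b : Fin n →₀ ℕ) : degF (a + b) = degF a + degF b := by
  unfold degF; simp [Finset.sum_add_distrib]

lemma degF_single (x : Fin n) (m : ℕ) : degF (Finsupp.single x m) = m := by
  unfold degF
  simp [Finsupp.single_apply]


lemma degF_sumE {k : ℕ} {v : Fin n →₀ ℕ} (h : SumE n k v) : degF v = 2 * k := by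
  obtain ⟨l, hcard, hedge, rfl⟩ := h
  induction l using Multiset.induction generalizing k with
  | empty => simp at hcard; subst hcard; simp [degF]
  | cons a s ih =>
    simp only [Multiset.card_cons] at hcard
    obtain ⟨i, j, hij, ha⟩ := hedge a (Multiset.mem_cons_self a s)
    subst ha
    rw [Multiset.sum_cons, degF_add, degF_add, degF_single, degF_single,
      ih (k := Multiset.card s) rfl (fun d hd => hedge d (Multiset.mem_cons_of_mem hd))]
    omega

lemma window_sumE {k : ℕ} {v : Fin n →₀ ℕ} (h : SumE n k v) (c : ℕ) :
    natV v c + natV v (c + 1) ≤ k := by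
  obtain ⟨l, hcard, hedge, rfl⟩ := h
  induction l using Multiset.induction generalizing k with
  | empty => simp at hcard; subst hcard; simp [natV]
  | cons a s ih =>
    simp only [Multiset.card_cons] at hcard
    obtain ⟨i, j, hij, ha⟩ := hedge a (Multiset.mem_cons_self a s)
    have hs := ih (k := Multiset.card s) rfl (fun d hd => hedge d (Multiset.mem_cons_of_mem hd))
    subst ha
    rw [Multiset.sum_cons]
    rw [natV_add, natV_add, natV_add, natV_add, natV_single, natV_single, natV_single,
      natV_single]
    subst hcard
    split <;> split <;> split <;> split <;> omega

lemma eq_of_le_of_degF_eq {a b : Fin n →₀ ℕ} (hle : a ≤ b) (hd : degF a = degF b) : a = b := by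
  have h1 : ∀ i : Fin n, a i ≤ b i := fun i => Finsupp.le_def.mp hle i
  have h2 : ∀ i ∈ Finset.univ, a i = b i := by
    by_contra hcon
    push_neg at hcon
    obtain ⟨i, _, hi⟩ := hcon
    have : degF a < degF b := by
      unfold degF
      exact Finset.sum_lt_sum (fun i _ => h1 i) ⟨i, Finset.mem_univ i, lt_of_le_of_ne (h1 i) hi⟩
    omega
  ext i
  exact h2 i (Finset.mem_univ i)


lemma sumE_of_list : ∀ (k : ℕ) (s : List (Fin n)), s.Pairwise (· ≤ ·) → s.length = 2 * k →
    (∀ i (h : i + k < s.length), ((s[i]'(by omega) : Fin n) : ℕ) + 2 ≤ ((s[i+k]'h : Fin n) : ℕ)) →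
    SumE n k ((s.map fun x => Finsupp.single x 1).sum) := by
  intro k
  induction k with
  | zero =>
    intro s _ hlen _
    have : s = [] := List.length_eq_zero_iff.mp (by omega)
    subst this
    exact ⟨0, rfl, by simp, by simp⟩
  | succ k ih =>
    intro s hsort hlen hpair
    obtain ⟨a, s', rfl⟩ : ∃ a s', s = a :: s' := by
      cases s with
      | nil => simp at hlen
      | cons a s' => exact ⟨a, s', rfl⟩
    have hlen' : s'.length = 2 * k + 1 := by simp at hlen; omega
    have hk' : k < s'.length := by omega
    set b := s'[k]'hk' with hb
    set s'' := s'.eraseIdx k with hs''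
    have hlen'' : s''.length = 2 * k := by
      rw [hs'', List.length_eraseIdx_of_lt hk']; omega
    have hperm : s'.Perm (b :: s'') := by
      conv_lhs => rw [← List.take_append_drop k s', List.drop_eq_getElem_cons hk']
      rw [hs'', List.eraseIdx_eq_take_drop_succ]
      exact List.perm_middle
    have hsort' : s'.Pairwise (· ≤ ·) := hsort.of_cons
    have hsort'' : s''.Pairwise (· ≤ ·) := List.Pairwise.sublist (List.eraseIdx_sublist s' k) hsort'
    have hab : (a : ℕ) + 2 ≤ (b : ℕ) := by
      have := hpair 0 (by simp; omega)
      simpa using this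
    have hE : (s'.eraseIdx k).length = 2 * k := by
      rw [List.length_eraseIdx_of_lt hk']; omega
    have hpair'' : ∀ i (h : i + k < s''.length),
        ((s''[i]'(by omega) : Fin n) : ℕ) + 2 ≤ ((s''[i+k]'h : Fin n) : ℕ) := by
      intro i h
      have hik : i < k := by omega
      have h1 : s''[i]'(by omega) = s'[i]'(by omega) :=
        List.getElem_eraseIdx_of_lt (by omega) hik
      have h2 : s''[i+k]'h = s'[i+k+1]'(by omega) :=
        List.getElem_eraseIdx_of_ge (by omega) (by omega)
      rw [h1, h2]
      have := hpair (i+1) (by simp; omega)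
      simpa [show i+1+(k+1) = (i+k+1)+1 by omega] using this
    obtain ⟨l, hcard, hedge, hsum⟩ := ih s'' hsort'' hlen'' hpair''
    refine ⟨(Finsupp.single a 1 + Finsupp.single b 1) ::ₘ l, by simp [hcard],
      fun d hd => ?_, ?_⟩
    · rcases Multiset.mem_cons.mp hd with h | h
      · exact h ▸ ⟨a, b, hab, rfl⟩
      · exact hedge d h
    · rw [Multiset.sum_cons, ← hsum]
      have hmap : ((a :: s').map fun x => Finsupp.single x (1:ℕ)).sum
          = Finsupp.single a 1 + ((b :: s'').map fun x => Finsupp.single x (1:ℕ)).sum := by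
        rw [List.map_cons, List.sum_cons]
        congr 1
        exact List.Perm.sum_eq (hperm.map _)
      rw [hmap, List.map_cons, List.sum_cons]
      abel


lemma list_sum_apply (l : List (Fin n →₀ ℕ)) (i : Fin n) :
    l.sum i = (l.map fun d => d i).sum := by
  induction l with
  | nil => simp
  | cons a t ih => simp [Finsupp.add_apply, ih]

lemma countP_or_le (l : List (Fin n)) (p q : Fin n → Bool) :
    l.countP (fun x => p x || q x) ≤ l.countP p + l.countP q := by
  induction l with
  | nil => simp
  | cons a t ih =>
    rw [List.countP_cons, List.countP_cons, List.countP_cons]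
    cases hp : p a <;> cases hq : q a <;> simp [hp, hq] <;> omega

lemma countP_val_eq {v : Fin n →₀ ℕ} (s : List (Fin n))
    (hs : (↑s : Multiset (Fin n)) = Finsupp.toMultiset v) (c : ℕ) :
    s.countP (fun x : Fin n => decide ((x : ℕ) = c)) = natV v c := by
  by_cases hc : c < n
  · have h0 : (fun x : Fin n => decide ((x : ℕ) = c)) = fun x => x == ⟨c, hc⟩ := by
      funext x
      by_cases hxc : (x : ℕ) = c
      · simp [hxc, Fin.ext_iff]
      · simp [hxc, Fin.ext_iff]
    rw [h0]
    have h1 : s.countP (fun x => x == (⟨c, hc⟩ : Fin n)) = s.count (⟨c, hc⟩ : Fin n) := rfl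
    rw [h1]
    have h2 : s.count (⟨c, hc⟩ : Fin n) = (↑s : Multiset (Fin n)).count ⟨c, hc⟩ := by
      simp
    rw [h2, hs, Finsupp.count_toMultiset]
    simp [natV, hc]
  · have h0 : s.countP (fun x : Fin n => decide ((x : ℕ) = c)) = 0 := by
      rw [List.countP_eq_zero]
      intro x hx
      have := x.isLt
      simp only [decide_eq_true_eq]
      omega
    rw [h0]
    simp [natV, hc]

lemma sumE_of_window {k : ℕ} {v : Fin n →₀ ℕ} (hdeg : degF v = 2 * k)
    (hwin : ∀ c : ℕ, natV v c + natV v (c + 1) ≤ k) : SumE n k v := by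
  classical
  set s : List (Fin n) := Multiset.sort (Finsupp.toMultiset v) (· ≤ ·) with hsdef
  have hcoe : (↑s : Multiset (Fin n)) = Finsupp.toMultiset v := Multiset.sort_eq _ _
  have hsort : s.Pairwise (· ≤ ·) := Multiset.pairwise_sort _ _
  have hlen : s.length = 2 * k := by
    have h1 : s.length = Multiset.card (Finsupp.toMultiset v) := by
      rw [← hcoe]; simp
    rw [h1, Finsupp.card_toMultiset, ← hdeg]
    unfold degF
    rw [Finsupp.sum_fintype _ _ (fun i => rfl)]
    simp
  have hsum : (s.map fun x => Finsupp.single x 1).sum = v := by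
    ext i
    rw [list_sum_apply, List.map_map]
    have : ((fun d : Fin n →₀ ℕ => d i) ∘ fun x => Finsupp.single x 1)
        = fun x : Fin n => if x = i then 1 else 0 := by
      funext x
      simp [Finsupp.single_apply]
    rw [this]
    have hcount : (s.map fun x : Fin n => if x = i then (1:ℕ) else 0).sum = s.count i := by
      induction s with
      | nil => simp
      | cons a t ih =>
        rw [List.map_cons, List.sum_cons, ih, List.count_cons]
        by_cases h : a = i <;> simp [h, beq_iff_eq]
        · omega
    rw [hcount]
    have : s.count i = (↑s : Multiset (Fin n)).count i := by simp
    rw [this, hcoe, Finsupp.count_toMultiset]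
  have hpair : ∀ i (h : i + k < s.length),
      ((s[i]'(by omega) : Fin n) : ℕ) + 2 ≤ ((s[i+k]'h : Fin n) : ℕ) := by
    intro i h
    by_contra hlt
    push_neg at hlt
    set c : ℕ := ((s[i]'(by omega) : Fin n) : ℕ) with hc
    have hle : ∀ p q (hp : p < s.length) (hq : q < s.length), p ≤ q →
        ((s[p]'hp : Fin n) : ℕ) ≤ ((s[q]'hq : Fin n) : ℕ) := by
      intro p q hp hq hpq
      rcases Nat.eq_or_lt_of_le hpq with rfl | hlt'
      · exact le_refl _
      · have h0 := List.Pairwise.rel_get_of_lt hsort (a := ⟨p, hp⟩) (b := ⟨q, hq⟩)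
          (by simpa using hlt')
        simp only [List.get_eq_getElem] at h0
        exact h0
    have hmono : ∀ j (hj : j < s.length), i ≤ j → j ≤ i + k →
        c ≤ ((s[j]'hj : Fin n) : ℕ) ∧ ((s[j]'hj : Fin n) : ℕ) ≤ c + 1 := by
      intro j hj hij hjk
      have h1 := hle i j (by omega) hj hij
      have h2 := hle j (i+k) hj h hjk
      omega
    -- the block of k+1 elements all with value c or c+1
    set blk : List (Fin n) := (s.drop i).take (k+1) with hblk
    have hblklen : blk.length = k + 1 := by
      rw [hblk, List.length_take, List.length_drop]
      omega
    have hblksub : blk.Sublist s := ((s.drop i).take_sublist (k+1)).trans (s.drop_sublist i)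
    have hblkmem : ∀ x ∈ blk, ((x : ℕ) = c ∨ (x : ℕ) = c + 1) := by
      intro x hx
      obtain ⟨m, hm, hxm⟩ := List.mem_iff_getElem.mp hx
      have hm' : m < k + 1 := by omega
      have hbm : blk[m]'hm = s[i+m]'(by omega) := by
        simp only [hblk, List.getElem_take, List.getElem_drop]
      rw [← hxm, hbm]
      have := hmono (i+m) (by omega) (by omega) (by omega)
      omega
    have hcnt : k + 1 ≤ s.countP
        (fun x : Fin n => decide ((x:ℕ) = c) || decide ((x:ℕ) = c+1)) := by
      have h1 : blk.countP (fun x : Fin n => decide ((x:ℕ) = c) || decide ((x:ℕ) = c+1))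
          = blk.length := by
        rw [List.countP_eq_length]
        intro x hx
        rcases hblkmem x hx with h | h <;> simp [h]
      calc k + 1 = blk.length := hblklen.symm
        _ = _ := h1.symm
        _ ≤ _ := hblksub.countP_le
    have := countP_or_le s (fun x : Fin n => decide ((x:ℕ) = c))
      (fun x : Fin n => decide ((x:ℕ) = c+1))
    rw [countP_val_eq s hcoe c, countP_val_eq s hcoe (c+1)] at this
    have := hwin c
    omega
  have := sumE_of_list k s hsort hlen hpair
  rwa [hsum] at this


variable {K : Type*} [Field K]

lemma X_mul_X_eq (i j : Fin n) :
    (X i : MvPolynomial (Fin n) K) * X j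
      = monomial (Finsupp.single i 1 + Finsupp.single j 1) 1 := by
  rw [← pow_one (X i), ← pow_one (X j), X_pow_eq_monomial, X_pow_eq_monomial,
    monomial_mul, one_mul]

lemma antipathIdeal_eq (K : Type*) [Field K] (n : ℕ) :
    antipathIdeal K n = Ideal.span ((fun d => monomial d (1:K)) '' {d | IsEdge n d}) := by
  unfold antipathIdeal
  congr 1
  ext m
  constructor
  · rintro ⟨i, j, hij, rfl⟩
    exact ⟨_, ⟨i, j, hij, rfl⟩, (X_mul_X_eq i j).symm⟩
  · rintro ⟨d, ⟨i, j, hij, rfl⟩, rfl⟩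
    exact ⟨i, j, hij, (X_mul_X_eq i j).symm⟩

lemma sumE_one_iff (v : Fin n →₀ ℕ) : SumE n 1 v ↔ IsEdge n v := by
  constructor
  · rintro ⟨l, hcard, hedge, rfl⟩
    obtain ⟨a, rfl⟩ := Multiset.card_eq_one.mp hcard
    simpa using hedge a (by simp)
  · intro h
    exact ⟨{v}, rfl, by simpa, by simp⟩

lemma sumE_succ_iff (k : ℕ) (w : Fin n →₀ ℕ) :
    SumE n (k+1) w ↔ ∃ v e, SumE n k v ∧ IsEdge n e ∧ w = v + e := by
  constructor
  · rintro ⟨l, hcard, hedge, rfl⟩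
    have : l ≠ 0 := by
      intro h; rw [h] at hcard; simp at hcard
    obtain ⟨e, he⟩ := Multiset.exists_mem_of_ne_zero this
    obtain ⟨l', rfl⟩ := Multiset.exists_cons_of_mem he
    refine ⟨l'.sum, e, ⟨l', by simpa using hcard, fun d hd => hedge d (Multiset.mem_cons_of_mem hd), rfl⟩,
      hedge e (Multiset.mem_cons_self e l'), ?_⟩
    rw [Multiset.sum_cons]; abel
  · rintro ⟨v, e, ⟨l, hcard, hedge, rfl⟩, he, rfl⟩
    refine ⟨e ::ₘ l, by simp [hcard], fun d hd => ?_, ?_⟩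
    · rcases Multiset.mem_cons.mp hd with h | h
      · exact h ▸ he
      · exact hedge d h
    · rw [Multiset.sum_cons]; abel

lemma antipathIdeal_pow_eq (K : Type*) [Field K] (n k : ℕ) (hk : 1 ≤ k) :
    antipathIdeal K n ^ k
      = Ideal.span ((fun d => monomial d (1:K)) '' {v | SumE n k v}) := by
  induction k with
  | zero => omega
  | succ k ih =>
    rcases Nat.eq_or_lt_of_le hk with h | h
    · have hset : {v : Fin n →₀ ℕ | SumE n (k+1) v} = {d | IsEdge n d} := by
        ext v
        rw [Set.mem_setOf_eq, Set.mem_setOf_eq, ← h, sumE_one_iff]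
      rw [hset, ← h, pow_one, antipathIdeal_eq]
    · have hk' : 1 ≤ k := by omega
      rw [pow_succ, ih hk', antipathIdeal_eq, Ideal.span_mul_span]
      congr 1
      ext m
      constructor
      · rintro hm
        simp only [Set.mem_mul, Set.mem_iUnion, Set.mem_image, Set.mem_setOf_eq,
          Set.mem_singleton_iff] at hm
        obtain ⟨a, ⟨v, hv, rfl⟩, b, ⟨e, he, rfl⟩, rfl⟩ := hm
        refine ⟨v + e, (sumE_succ_iff k _).mpr ⟨v, e, hv, he, rfl⟩, ?_⟩
        rw [monomial_mul, one_mul]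
      · rintro ⟨w, hw, rfl⟩
        obtain ⟨v, e, hv, he, rfl⟩ := (sumE_succ_iff k w).mp hw
        simp only [Set.mem_mul, Set.mem_iUnion, Set.mem_image, Set.mem_setOf_eq,
          Set.mem_singleton_iff]
        exact ⟨monomial v 1, ⟨v, hv, rfl⟩, monomial e 1, ⟨e, he, rfl⟩,
          by rw [monomial_mul, one_mul]⟩

lemma monomial_mem_pow_iff (n k : ℕ) (hk : 1 ≤ k) (d : Fin n →₀ ℕ) :
    monomial d (1:K) ∈ antipathIdeal K n ^ k ↔ ∃ v, SumE n k v ∧ v ≤ d := by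
  rw [antipathIdeal_pow_eq K n k hk, mem_ideal_span_monomial_image]
  classical
  have hsupp : (monomial d (1:K)).support = {d} := by
    rw [support_monomial, if_neg one_ne_zero]
  rw [hsupp]
  simp only [Finset.mem_singleton, forall_eq, Set.mem_setOf_eq]

lemma isMinGen_iff (n k : ℕ) (hk : 1 ≤ k) (d : Fin n →₀ ℕ) :
    IsMinGen (antipathIdeal K n ^ k) d ↔ SumE n k d := by
  constructor
  · rintro ⟨hmem, hmin⟩
    obtain ⟨v, hv, hvd⟩ := (monomial_mem_pow_iff n k hk d).mp hmem
    have : v = d := hmin v hvd ((monomial_mem_pow_iff n k hk v).mpr ⟨v, hv, le_refl v⟩)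
    exact this ▸ hv
  · intro h
    refine ⟨(monomial_mem_pow_iff n k hk d).mpr ⟨d, h, le_refl d⟩, fun d' hd' hmem => ?_⟩
    obtain ⟨v, hv, hvd⟩ := (monomial_mem_pow_iff n k hk d').mp hmem
    have h1 : v ≤ d := le_trans hvd hd'
    have h2 : degF v = degF d := by rw [degF_sumE hv, degF_sumE h]
    have h3 : v = d := eq_of_le_of_degF_eq h1 h2
    exact le_antisymm hd' (h3 ▸ hvd)


lemma natV_fin (v : Fin n →₀ ℕ) (x : Fin n) : natV v (x : ℕ) = v x := by
  simp [natV, x.isLt]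

lemma exchange {k : ℕ} {u v : Fin n →₀ ℕ} (hu : SumE n k u) (hv : SumE n k v)
    (hlt : toLex v < toLex u) :
    ∃ j : Fin n, v j < u j ∧ ∃ w : Fin n →₀ ℕ, SumE n k w ∧
      w ≤ v + Finsupp.single j 1 ∧ toLex v < toLex w := by
  obtain ⟨j, hbelow, hj⟩ := Finsupp.Lex.lt_iff.mp hlt
  have hj' : v j < u j := hj
  have hdegu : degF u = 2 * k := degF_sumE hu
  have hdegv : degF v = 2 * k := degF_sumE hv
  -- there is some support of v above j
  have hex : ∃ l0 : Fin n, j < l0 ∧ 0 < v l0 := by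
    by_contra hcon
    push_neg at hcon
    have : degF v < degF u := by
      unfold degF
      refine Finset.sum_lt_sum (fun i _ => ?_) ⟨j, Finset.mem_univ j, hj'⟩
      rcases lt_trichotomy i j with h | h | h
      · exact le_of_eq (hbelow i h)
      · exact h ▸ le_of_lt hj'
      · rw [Nat.le_zero.mp (hcon i h)]; exact Nat.zero_le _
    omega
  obtain ⟨l, hjl, hvl, hcase⟩ : ∃ l : Fin n, (j : ℕ) < (l : ℕ) ∧ 0 < v l ∧
      (((l : ℕ) = (j : ℕ) + 1) ∨ natV v ((j : ℕ) + 1) = 0) := by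
    by_cases hA : ∃ hn1 : (j : ℕ) + 1 < n, 0 < v ⟨(j : ℕ) + 1, hn1⟩
    · obtain ⟨hn1, hpos⟩ := hA
      exact ⟨⟨(j : ℕ) + 1, hn1⟩, by simp, hpos, Or.inl rfl⟩
    · obtain ⟨l0, hl0, hl0pos⟩ := hex
      refine ⟨l0, hl0, hl0pos, Or.inr ?_⟩
      push_neg at hA
      unfold natV
      split
      · rename_i h
        exact Nat.le_zero.mp (hA h)
      · rfl
  -- the exchanged vector
  have hsingle_le : Finsupp.single l 1 ≤ v := by
    rw [Finsupp.single_le_iff]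
    exact hvl
  set v' : Fin n →₀ ℕ := v - Finsupp.single l 1 with hv'def
  have hsplit : v' + Finsupp.single l 1 = v := tsub_add_cancel_of_le hsingle_le
  set w : Fin n →₀ ℕ := v' + Finsupp.single j 1 with hwdef
  have hv'nat : ∀ c : ℕ, natV v' c + (if (l : ℕ) = c then 1 else 0) = natV v c := by
    intro c
    have := congrArg (fun z => natV z c) hsplit
    simpa [natV_add, natV_single] using this
  have hwnat : ∀ c : ℕ, natV w c = natV v' c + (if (j : ℕ) = c then 1 else 0) := by
    intro c
    rw [hwdef, natV_add, natV_single]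
  have hvjuN : natV v (j : ℕ) < natV u (j : ℕ) := by
    rw [natV_fin, natV_fin]; exact hj'
  have hagree : ∀ c : ℕ, c < (j : ℕ) → natV v c = natV u c := by
    intro c hc
    have hcn : c < n := lt_trans hc j.isLt
    have : (⟨c, hcn⟩ : Fin n) < j := by rwa [Fin.lt_def]
    have h0 := hbelow ⟨c, hcn⟩ this
    simpa [natV, hcn] using h0
  have Hle : ∀ x : ℕ, (j : ℕ) ≠ x → natV w x ≤ natV v x := by
    intro x hx
    rw [hwnat x, if_neg hx]
    have := hv'nat x
    omega
  have Hj : natV w (j : ℕ) = natV v (j : ℕ) + 1 := by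
    rw [hwnat _, if_pos rfl]
    have h0 := hv'nat (j : ℕ)
    rw [if_neg (by omega)] at h0
    omega
  have hwin : ∀ c : ℕ, natV w c + natV w (c + 1) ≤ k := by
    intro c
    rcases Nat.lt_trichotomy ((j : ℕ)) c with hc | hc | hc
    · -- j < c : window entirely above j
      have h1 := Hle c (by omega)
      have h2 := Hle (c+1) (by omega)
      have F1 := window_sumE hv c
      omega
    · -- j = c
      rw [← hc]
      rcases hcase with hl1 | hl1
      · have h2 : natV w ((j:ℕ)+1) = natV v ((j:ℕ)+1) - 1 ∧ 1 ≤ natV v ((j:ℕ)+1) := by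
          rw [hwnat _, if_neg (by omega)]
          have h0 := hv'nat ((j:ℕ)+1)
          rw [if_pos hl1] at h0
          omega
        have F1 := window_sumE hv (j : ℕ)
        omega
      · have h2 : natV w ((j:ℕ)+1) ≤ natV v ((j:ℕ)+1) := Hle _ (by omega)
        have F2 := window_sumE hu (j : ℕ)
        omega
    · -- c < j
      rcases Nat.lt_or_ge (c+1) (j : ℕ) with hc1 | hc1
      · -- window entirely below j
        have h1 := Hle c (by omega)
        have h2 := Hle (c+1) (by omega)
        have F1 := window_sumE hv c
        omega
      · have hjc : (j : ℕ) = c + 1 := by omega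
        rw [← hjc]
        have h1 := Hle c (by omega)
        have G := hagree c (by omega)
        have F2 := window_sumE hu c
        rw [← hjc] at F2
        omega
  have hdegw : degF w = 2 * k := by
    have h1 : degF v' + 1 = degF v := by
      rw [← hsplit, degF_add, degF_single]
    rw [hwdef, degF_add, degF_single]
    omega
  have hwsum : SumE n k w := sumE_of_window hdegw hwin
  refine ⟨j, hj', w, hwsum, ?_, ?_⟩
  · rw [hwdef]
    exact add_le_add (tsub_le_self) le_rfl
  · rw [Finsupp.Lex.lt_iff]
    refine ⟨j, fun j' hj'' => ?_, ?_⟩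
    · show v j' = w j'
      have h1 : (j' : ℕ) < (j : ℕ) := hj''
      have h2 := hwnat (j' : ℕ)
      have h3 := hv'nat (j' : ℕ)
      rw [if_neg (by omega)] at h2
      rw [if_neg (by omega)] at h3
      rw [natV_fin, natV_fin] at *
      omega
    · show v j < w j
      have h2 := Hj
      rw [natV_fin, natV_fin] at h2
      omega


lemma take_lt {L : List (Fin n →₀ ℕ)}
    (hsort : L.Pairwise fun d d' => toLex d' < toLex d)
    {t : ℕ} (ht : t < L.length) {d : Fin n →₀ ℕ} (hd : d ∈ L.take t) :
    toLex (L[t]'ht) < toLex d := by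
  rw [List.mem_take_iff_getElem] at hd
  obtain ⟨s, hs, rfl⟩ := hd
  exact List.pairwise_iff_getElem.mp hsort s t (by omega) ht (by omega)

lemma mem_take_of_gt {L : List (Fin n →₀ ℕ)}
    (hsort : L.Pairwise fun d d' => toLex d' < toLex d)
    {t : ℕ} (ht : t < L.length) {w : Fin n →₀ ℕ} (hw : w ∈ L)
    (hgt : toLex (L[t]'ht) < toLex w) :
    w ∈ L.take t := by
  rw [List.mem_iff_getElem] at hw
  obtain ⟨s, hs, rfl⟩ := hw
  rcases Nat.lt_trichotomy s t with h | h | h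
  · rw [List.mem_take_iff_getElem]
    exact ⟨s, by omega, rfl⟩
  · subst h
    exact absurd hgt (lt_irrefl _)
  · have := List.pairwise_iff_getElem.mp hsort t s ht hs h
    exact absurd hgt (not_lt_of_gt this)

end Antipath

open Antipath

/-- For all `n ≥ 1` and `k ≥ 1`, listing the minimal monomial generators of
`I(P_n^c)^k` in decreasing lexicographic order (variable order `x_1 > x_2 > ⋯ > x_n`) is a
linear quotients ordering: each successive colon ideal is generated by a subset of the
variables. -/
theorem antipath_power_linearQuotients (K : Type*) [Field K] (n k : ℕ)
    (hn : 1 ≤ n) (hk : 1 ≤ k)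
    (L : List (Fin n →₀ ℕ))
    (hsort : L.Pairwise fun d d' => toLex d' < toLex d)
    (hmem : ∀ d, d ∈ L ↔ IsMinGen (antipathIdeal K n ^ k) d) :
    ∀ (t : ℕ) (ht : t < L.length), 0 < t →
      ∃ S : Set (Fin n),
        (Ideal.span { m | ∃ d ∈ L.take t, m = monomial d (1 : K) }).colon
            (Ideal.span {monomial (L.get ⟨t, ht⟩) (1 : K)}) =
          Ideal.span (MvPolynomial.X '' S) := by
  intro t ht htpos
  classical
  simp only [List.get_eq_getElem]
  set m : Fin n →₀ ℕ := L[t]'ht with hmdef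
  have hmL : m ∈ L := List.getElem_mem ht
  have hmSum : SumE n k m := (isMinGen_iff n k hk m).mp ((hmem m).mp hmL)
  refine ⟨{x : Fin n | ∃ d ∈ L.take t, d ≤ m + Finsupp.single x 1}, ?_⟩
  have hJ : Ideal.span { mm | ∃ d ∈ L.take t, mm = monomial d (1 : K) }
      = Ideal.span ((fun d => monomial d (1:K)) '' {d | d ∈ L.take t}) := by
    congr 1
    ext mm
    constructor
    · rintro ⟨d, hd, rfl⟩
      exact ⟨d, hd, rfl⟩
    · rintro ⟨d, hd, rfl⟩
      exact ⟨d, hd, rfl⟩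
  apply le_antisymm
  · intro f hf
    rw [Ideal.mem_colon_span_singleton, hJ, mem_ideal_span_monomial_image] at hf
    rw [mem_ideal_span_X_image]
    intro e he
    have hsupport : e + m ∈ (f * monomial m (1:K)).support := by
      rw [MvPolynomial.mem_support_iff, MvPolynomial.coeff_mul_monomial]
      simpa using MvPolynomial.mem_support_iff.mp he
    obtain ⟨d, hd, hdle⟩ := hf (e + m) hsupport
    have hdL : d ∈ L := List.mem_of_mem_take hd
    have hdSum : SumE n k d := (isMinGen_iff n k hk d).mp ((hmem d).mp hdL)
    have hmd : toLex m < toLex d := take_lt hsort ht hd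
    obtain ⟨x, hx, w, hwSum, hwle, hmw⟩ := exchange hdSum hmSum hmd
    have hwL : w ∈ L := (hmem w).mpr ((isMinGen_iff n k hk w).mpr hwSum)
    refine ⟨x, ⟨w, mem_take_of_gt hsort ht hwL hmw, hwle⟩, ?_⟩
    have h1 : d x ≤ e x + m x := by
      have := Finsupp.le_def.mp hdle x
      simpa using this
    omega
  · rw [Ideal.span_le]
    rintro _ ⟨x, hx, rfl⟩
    rw [SetLike.mem_coe, Ideal.mem_colon_span_singleton]
    obtain ⟨d, hd, hdle⟩ := hx
    rw [hJ, mem_ideal_span_monomial_image]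
    have hXmul : (X x : MvPolynomial (Fin n) K) * monomial m 1
        = monomial (Finsupp.single x 1 + m) 1 := by
      rw [← pow_one (X x), X_pow_eq_monomial, monomial_mul, one_mul]
    rw [hXmul]
    intro xi hxi
    have hsupp : (monomial (Finsupp.single x 1 + m) (1:K)).support
        = {Finsupp.single x 1 + m} := by
      rw [support_monomial, if_neg one_ne_zero]
    rw [hsupp, Finset.mem_singleton] at hxi
    subst hxi
    exact ⟨d, hd, by rwa [add_comm]⟩
end

section
/- Let m = x_{i_1} ⋯ x_{i_k} x_{j_1} ⋯ x_{j_k} be a monomial with i_1 ≤ ⋯ ≤ i_k ≤ j_1 ≤ ⋯ ≤ j_k and i_r + 2 ≤ j_r for all r, so that m ∈ I(P_n^c)^k. If 1 ≤ i' < i_r for some index r, then the monomial x_{i'} · m / x_{i_r} also belongs to I(P_n^c)^k. -/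
open MvPolynomial

/-- If `m = x_{i_1} ⋯ x_{i_k} x_{j_1} ⋯ x_{j_k} ∈ I(P_n^c)^k` with
`i_1 ≤ ⋯ ≤ i_k ≤ j_1 ≤ ⋯ ≤ j_k` and `i_r + 2 ≤ j_r` for all `r`, and `i' < i_r` for some
index `r`, then `x_{i'} · m / x_{i_r}` (i.e. `m` with the factor `x_{i_r}` replaced by
`x_{i'}`) also belongs to `I(P_n^c)^k`. -/
theorem antipath_power_replace_lower (K : Type*) [Field K] (n k : ℕ)
    (i j : Fin k → Fin n) (hi : Monotone i) (hj : Monotone j)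
    (hij : ∀ r s : Fin k, i r ≤ j s)
    (hadj : ∀ r : Fin k, (i r : ℕ) + 2 ≤ (j r : ℕ))
    (r : Fin k) (i' : Fin n) (hi' : i' < i r) :
    ((∏ s, X (Function.update i r i' s)) * ∏ s, X (j s) : MvPolynomial (Fin n) K) ∈
      antipathIdeal K n ^ k := by
  rw [← Finset.prod_mul_distrib]
  have hmem : ∀ s : Fin k,
      (X (Function.update i r i' s) * X (j s) : MvPolynomial (Fin n) K) ∈
        antipathIdeal K n := by
    intro s
    apply Ideal.subset_span
    refine ⟨Function.update i r i' s, j s, ?_, rfl⟩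
    by_cases hs : s = r
    · subst hs
      rw [Function.update_self]
      have h1 : (i' : ℕ) < (i s : ℕ) := hi'
      have h2 := hadj s
      omega
    · rw [Function.update_of_ne hs]
      exact hadj s
  have := Ideal.prod_mem_prod (ι := Fin k) (s := Finset.univ)
    (I := fun _ => antipathIdeal K n)
    (x := fun s => (X (Function.update i r i' s) * X (j s) : MvPolynomial (Fin n) K))
    (fun s _ => hmem s)
  simpa [Finset.prod_const, Finset.card_univ] using this
end

section
/- Let m = x_{i_1} ⋯ x_{i_k} x_{j_1} ⋯ x_{j_k} be a monomial with i_1 ≤ ⋯ ≤ i_k ≤ j_1 ≤ ⋯ ≤ j_k and i_r + 2 ≤ j_r for all r, so that m ∈ I(P_n^c)^k. If j' satisfies i_r + 2 ≤ j' ≤ n for some index r, then the monomial x_{j'} · m / x_{j_r} also belongs to I(P_n^c)^k. -/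
open MvPolynomial

/-- If `m = x_{i_1} ⋯ x_{i_k} x_{j_1} ⋯ x_{j_k} ∈ I(P_n^c)^k` with
`i_1 ≤ ⋯ ≤ i_k ≤ j_1 ≤ ⋯ ≤ j_k` and `i_r + 2 ≤ j_r` for all `r`, and `j'` is a vertex with
`i_r + 2 ≤ j' (≤ n)` for some index `r`, then `x_{j'} · m / x_{j_r}` (i.e. `m` with the
factor `x_{j_r}` replaced by `x_{j'}`) also belongs to `I(P_n^c)^k`. -/
theorem antipath_power_replace_upper (K : Type*) [Field K] (n k : ℕ)
    (i j : Fin k → Fin n) (hi : Monotone i) (hj : Monotone j)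
    (hij : ∀ r s : Fin k, i r ≤ j s)
    (hadj : ∀ r : Fin k, (i r : ℕ) + 2 ≤ (j r : ℕ))
    (r : Fin k) (j' : Fin n) (hj' : (i r : ℕ) + 2 ≤ (j' : ℕ)) :
    ((∏ s, X (i s)) * ∏ s, X (Function.update j r j' s) : MvPolynomial (Fin n) K) ∈
      antipathIdeal K n ^ k := by
  rw [← Finset.prod_mul_distrib]
  have h : ∏ s : Fin k, (X (i s) * X (Function.update j r j' s) : MvPolynomial (Fin n) K) ∈
      ∏ _s : Fin k, antipathIdeal K n := by
    refine Ideal.prod_mem_prod fun s _ => Ideal.subset_span ?_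
    refine ⟨i s, Function.update j r j' s, ?_, rfl⟩
    rcases eq_or_ne s r with h | h
    · subst h; simp [hj']
    · rw [Function.update_of_ne h]; exact hadj s
  simpa using h
end

section
/- Let n ≥ 2 and let G be the anticycle on the n+3 vertices x, z_1, z_2, y_1,…,y_n, with J = I(H) the edge ideal of the induced antipath H = G \ {x}. For each 1 ≤ i ≤ n, the colon ideal ( J^2 + (x z_1 z_2 y_l : 1 ≤ l < i) ) : (x z_1 z_2 y_i) is generated by a subset of the variables of R; explicitly, it equals (y_2,…,y_n, z_2) when i = 1, it equals (z_1, z_2, y_1,…,y_n) when 1 < i < n, and it equals (y_1,…,y_{n−1}, z_1) when i = n. -/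
open MvPolynomial

/-! The anticycle `G` on the `n+3` vertices `x, z₁, y₁, …, y_n, z₂`, realized on `Fin (n+3)`
with the cycle labeling `x = 0`, `z₁ = 1`, `y_i = i+1` (so `y_i` has index `i+2` for the
0-indexed `i : Fin n`), `z₂ = n+2`.  The non-edges of `G` are exactly the consecutive pairs
on the cycle `x ∼ z₁ ∼ y₁ ∼ ⋯ ∼ y_n ∼ z₂ ∼ x`. -/

/-- The vertex `x`. -/
def vx (n : ℕ) : Fin (n + 3) := ⟨0, by omega⟩
/-- The vertex `z₁`. -/
def vz1 (n : ℕ) : Fin (n + 3) := ⟨1, by omega⟩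
/-- The vertex `z₂`. -/
def vz2 (n : ℕ) : Fin (n + 3) := ⟨n + 2, by omega⟩
/-- The vertex `y_i` (0-indexed: `vy n i` is `y_{i+1}` of the paper). -/
def vy (n : ℕ) (i : Fin n) : Fin (n + 3) := ⟨(i : ℕ) + 2, by omega⟩

/-- The edge ideal `J = I(H)` of the induced antipath `H = G \ {x}` on the vertices
`z₁, y₁, …, y_n, z₂` (indices `1, …, n+2`): its edges are the pairs of non-consecutive
indices among `1, …, n+2`. -/
noncomputable def Jideal (K : Type*) [Field K] (n : ℕ) :
    Ideal (MvPolynomial (Fin (n + 3)) K) :=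
  Ideal.span { m | ∃ a b : Fin (n + 3),
    1 ≤ (a : ℕ) ∧ (a : ℕ) + 2 ≤ (b : ℕ) ∧ m = X a * X b }

@[simp] lemma vx_val (n : ℕ) : ((vx n : Fin (n+3)) : ℕ) = 0 := rfl
@[simp] lemma vz1_val (n : ℕ) : ((vz1 n : Fin (n+3)) : ℕ) = 1 := rfl
@[simp] lemma vz2_val (n : ℕ) : ((vz2 n : Fin (n+3)) : ℕ) = n + 2 := rfl
@[simp] lemma vy_val (n : ℕ) (i : Fin n) : ((vy n i : Fin (n+3)) : ℕ) = (i : ℕ) + 2 := rfl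

noncomputable def sgl (n : ℕ) (v : Fin (n+3)) : Fin (n+3) →₀ ℕ := Finsupp.single v 1

lemma sval {N : ℕ} (a w : Fin N) :
    ((a:ℕ) = (w:ℕ) → (Finsupp.single a 1 : Fin N →₀ ℕ) w = 1) ∧
    ((a:ℕ) ≠ (w:ℕ) → (Finsupp.single a 1 : Fin N →₀ ℕ) w = 0) := by
  have h : (Finsupp.single a 1 : Fin N →₀ ℕ) w = if a = w then 1 else 0 :=
    Finsupp.single_apply
  constructor <;> intro hh
  · rw [h, if_pos (Fin.ext hh)]
  · rw [h, if_neg (fun hc => hh (congrArg Fin.val hc))]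

lemma XXmon {K : Type*} [Field K] {n : ℕ} (a b : Fin (n+3)) :
    (X a * X b : MvPolynomial (Fin (n+3)) K) = monomial (sgl n a + sgl n b) 1 := by
  rw [X, X, monomial_mul, one_mul, sgl, sgl]

lemma X4mon {K : Type*} [Field K] {n : ℕ} (a b c e : Fin (n+3)) :
    (X a * X b * X c * X e : MvPolynomial (Fin (n+3)) K) =
      monomial (sgl n a + sgl n b + sgl n c + sgl n e) 1 := by
  rw [X, X, X, X, monomial_mul, monomial_mul, monomial_mul, one_mul, one_mul, one_mul,
    sgl, sgl, sgl, sgl]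

def Tset (n : ℕ) (i : Fin n) : Set (Fin (n+3) →₀ ℕ) :=
  {d | ∃ a b c e : Fin (n+3), (1 ≤ (a:ℕ) ∧ (a:ℕ)+2 ≤ (b:ℕ)) ∧ (1 ≤ (c:ℕ) ∧ (c:ℕ)+2 ≤ (e:ℕ)) ∧
      d = sgl n a + sgl n b + (sgl n c + sgl n e)}
  ∪ {d | ∃ l : Fin n, l < i ∧
      d = sgl n (vx n) + sgl n (vz1 n) + sgl n (vz2 n) + sgl n (vy n l)}

lemma Ieq (K : Type*) [Field K] (n : ℕ) (i : Fin n) :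
    Jideal K n ^ 2 + Ideal.span { m | ∃ l : Fin n, l < i ∧
        m = X (vx n) * X (vz1 n) * X (vz2 n) * X (vy n l) } =
    Ideal.span ((fun d => monomial d (1:K)) '' Tset n i) := by
  rw [pow_two, Jideal, Ideal.span_mul_span', Submodule.add_eq_sup, ← Ideal.span_union]
  congr 1
  ext p
  constructor
  · rintro (hp | ⟨l, hl, rfl⟩)
    · rcases hp with ⟨x, ⟨a, b, ha, hab, rfl⟩, y, ⟨c, e, hc, hce, rfl⟩, rfl⟩
      refine ⟨_, Or.inl ⟨a, b, c, e, ⟨ha, hab⟩, ⟨hc, hce⟩, rfl⟩, ?_⟩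
      show (monomial (sgl n a + sgl n b + (sgl n c + sgl n e)) (1:K)) = X a * X b * (X c * X e)
      rw [XXmon (n := n) a b, XXmon (n := n) c e, monomial_mul, one_mul]
    · exact ⟨_, Or.inr ⟨l, hl, rfl⟩, (X4mon _ _ _ _).symm⟩
  · rintro ⟨d, hd | ⟨l, hl, rfl⟩, rfl⟩
    · obtain ⟨a, b, c, e, ⟨ha, hab⟩, ⟨hc, hce⟩, rfl⟩ := hd
      left
      show (monomial (sgl n a + sgl n b + (sgl n c + sgl n e)) (1:K)) ∈ _
      have : (monomial (sgl n a + sgl n b + (sgl n c + sgl n e)) (1:K)) =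
          (X a * X b) * (X c * X e) := by
        rw [XXmon (n := n), XXmon (n := n), monomial_mul, one_mul]
      rw [this]
      exact Set.mul_mem_mul ⟨a, b, ha, hab, rfl⟩ ⟨c, e, hc, hce, rfl⟩
    · exact Or.inr ⟨l, hl, (X4mon _ _ _ _).symm⟩

theorem colon_monomial_span {σ K : Type*} [Field K] (T : Set (σ →₀ ℕ)) (dm : σ →₀ ℕ) (S : Set σ)
    (h1 : ∀ v ∈ S, ∃ g ∈ T, g ≤ Finsupp.single v 1 + dm)
    (h2 : ∀ u : σ →₀ ℕ, ∀ g ∈ T, g ≤ u + dm → ∃ v ∈ S, u v ≠ 0) :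
    (Ideal.span ((fun d => monomial d (1:K)) '' T)).colon
      (Ideal.span {(monomial dm 1 : MvPolynomial σ K)}) = Ideal.span (X '' S) := by
  apply le_antisymm
  · intro f hf
    rw [Ideal.mem_colon_span_singleton] at hf
    rw [mem_ideal_span_X_image]
    rw [mem_ideal_span_monomial_image] at hf
    intro u hu
    have hmem : u + dm ∈ (f * monomial dm 1).support := by
      rw [MvPolynomial.mem_support_iff, MvPolynomial.coeff_mul_monomial, mul_one]
      rwa [MvPolynomial.mem_support_iff] at hu
    obtain ⟨g, hgT, hg⟩ := hf _ hmem
    exact h2 u g hgT hg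
  · rw [Ideal.span_le]
    rintro _ ⟨v, hv, rfl⟩
    rw [SetLike.mem_coe, Ideal.mem_colon_span_singleton]
    obtain ⟨g, hgT, hg⟩ := h1 v hv
    have : (X v : MvPolynomial σ K) * monomial dm 1 = monomial (Finsupp.single v 1 + dm) 1 := by
      rw [X, monomial_mul, one_mul]
    rw [this, mem_ideal_span_monomial_image]
    intro u hu
    classical
    rw [MvPolynomial.support_monomial, if_neg one_ne_zero] at hu
    simp only [Finset.mem_singleton] at hu
    exact ⟨g, hgT, hu ▸ hg⟩

noncomputable def dmi (n : ℕ) (i : Fin n) : Fin (n+3) →₀ ℕ :=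
  sgl n (vx n) + sgl n (vz1 n) + sgl n (vz2 n) + sgl n (vy n i)

lemma main0 {K : Type*} [Field K] {n : ℕ} (hn : 2 ≤ n) (i : Fin n) (hi : (i:ℕ) = 0) :
    (Ideal.span ((fun d => monomial d (1:K)) '' Tset n i)).colon
      ((Ideal.span {monomial (dmi n i) (1:K)} : Ideal (MvPolynomial (Fin (n+3)) K)) : Set (MvPolynomial (Fin (n+3)) K)) =
    Ideal.span (X '' {v : Fin (n+3) | 3 ≤ (v:ℕ)}) := by
  apply colon_monomial_span
  · intro v hv
    simp only [Set.mem_setOf_eq] at hv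
    obtain ⟨c2, hc2⟩ : ∃ c : Fin (n+3), (c:ℕ) = 2 := ⟨⟨2, by omega⟩, rfl⟩
    by_cases hv2 : (v:ℕ) = n+2
    · refine ⟨_, Or.inl ⟨vz1 n, vz2 n, c2, vz2 n,
        ⟨by simp, by simp; omega⟩, ⟨by omega, by simp; omega⟩, rfl⟩, ?_⟩
      rw [Finsupp.le_def]; intro w
      simp only [Finsupp.coe_add, Pi.add_apply, sgl, dmi]
      have B0 := sval (vx n) w; have B1 := sval (vz1 n) w; have B2 := sval (vz2 n) w
      have B3 := sval c2 w; have Bv := sval v w; have By := sval (vy n i) w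
      simp only [vx_val, vz1_val, vz2_val, vy_val] at B0 B1 B2 By
      omega
    · refine ⟨_, Or.inl ⟨vz1 n, v, c2, vz2 n,
        ⟨by simp, by simp; omega⟩, ⟨by omega, by simp; omega⟩, rfl⟩, ?_⟩
      rw [Finsupp.le_def]; intro w
      simp only [Finsupp.coe_add, Pi.add_apply, sgl, dmi]
      have B0 := sval (vx n) w; have B1 := sval (vz1 n) w; have B2 := sval (vz2 n) w
      have B3 := sval c2 w; have Bv := sval v w; have By := sval (vy n i) w
      simp only [vx_val, vz1_val, vz2_val, vy_val] at B0 B1 B2 By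
      omega
  · intro u g hg hle
    by_contra hcon
    push_neg at hcon
    simp only [Set.mem_setOf_eq] at hcon
    rw [Finsupp.le_def] at hle
    rcases hg with ⟨a, b, c, e, ⟨ha, hab⟩, ⟨hc, hce⟩, rfl⟩ | ⟨l, hl, rfl⟩
    · have Hb := hle b; have He := hle e
      simp only [Finsupp.coe_add, Pi.add_apply, sgl, dmi] at Hb He
      have ub : u b = 0 := hcon b (by omega)
      have ue : u e = 0 := hcon e (by omega)
      have f1 := sval a b; have f2 := sval b b; have f3 := sval c b; have f4 := sval e b
      have f5 := sval (vx n) b; have f6 := sval (vz1 n) b; have f7 := sval (vz2 n) b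
      have f8 := sval (vy n i) b
      have g1 := sval a e; have g2 := sval b e; have g3 := sval c e; have g4 := sval e e
      have g5 := sval (vx n) e; have g6 := sval (vz1 n) e; have g7 := sval (vz2 n) e
      have g8 := sval (vy n i) e
      simp only [vx_val, vz1_val, vz2_val, vy_val] at f5 f6 f7 f8 g5 g6 g7 g8
      omega
    · rw [Fin.lt_def] at hl
      omega
lemma main_mid {K : Type*} [Field K] {n : ℕ} (hn : 2 ≤ n) (i : Fin n)
    (hi : 0 < (i:ℕ) ∧ (i:ℕ) < n - 1) :
    (Ideal.span ((fun d => monomial d (1:K)) '' Tset n i)).colon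
      ((Ideal.span {monomial (dmi n i) (1:K)} : Ideal (MvPolynomial (Fin (n+3)) K)) : Set (MvPolynomial (Fin (n+3)) K)) =
    Ideal.span (X '' {v : Fin (n+3) | 1 ≤ (v:ℕ)}) := by
  obtain ⟨hi1, hi2⟩ := hi
  apply colon_monomial_span
  · intro v hv
    simp only [Set.mem_setOf_eq] at hv
    have hvlt := v.isLt
    by_cases hv1 : (v:ℕ) = 1
    · refine ⟨_, Or.inl ⟨vz1 n, vy n i, vz1 n, vz2 n,
        ⟨by simp only [vz1_val]; omega, by simp only [vx_val, vz1_val, vz2_val, vy_val]; omega⟩, ⟨by simp only [vz1_val]; omega, by simp only [vx_val, vz1_val, vz2_val, vy_val]; omega⟩, rfl⟩, ?_⟩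
      rw [Finsupp.le_def]; intro w
      simp only [Finsupp.coe_add, Pi.add_apply, sgl, dmi]
      have B0 := sval (vx n) w; have B1 := sval (vz1 n) w; have B2 := sval (vz2 n) w
      have Bv := sval v w; have By := sval (vy n i) w
      simp only [vx_val, vz1_val, vz2_val, vy_val] at B0 B1 B2 By
      omega
    · by_cases hv2 : (v:ℕ) = n+2
      · refine ⟨_, Or.inl ⟨vz1 n, vz2 n, vy n i, vz2 n,
          ⟨by simp only [vz1_val]; omega, by simp only [vx_val, vz1_val, vz2_val, vy_val]; omega⟩, ⟨by simp only [vx_val, vz1_val, vz2_val, vy_val]; omega, by simp only [vx_val, vz1_val, vz2_val, vy_val]; omega⟩, rfl⟩, ?_⟩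
        rw [Finsupp.le_def]; intro w
        simp only [Finsupp.coe_add, Pi.add_apply, sgl, dmi]
        have B0 := sval (vx n) w; have B1 := sval (vz1 n) w; have B2 := sval (vz2 n) w
        have Bv := sval v w; have By := sval (vy n i) w
        simp only [vx_val, vz1_val, vz2_val, vy_val] at B0 B1 B2 By
        omega
      · by_cases hvy : (v:ℕ) < (i:ℕ) + 2
        · -- previous generator, l = v - 2 < i
          obtain ⟨l, hlv⟩ : ∃ l : Fin n, (l:ℕ) = (v:ℕ) - 2 := ⟨⟨(v:ℕ)-2, by omega⟩, rfl⟩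
          refine ⟨_, Or.inr ⟨l, by rw [Fin.lt_def]; omega, rfl⟩, ?_⟩
          rw [Finsupp.le_def]; intro w
          simp only [Finsupp.coe_add, Pi.add_apply, sgl, dmi]
          have B0 := sval (vx n) w; have B1 := sval (vz1 n) w; have B2 := sval (vz2 n) w
          have Bv := sval v w; have By := sval (vy n i) w; have Bl := sval (vy n l) w
          simp only [vx_val, vz1_val, vz2_val, vy_val] at B0 B1 B2 By Bl
          omega
        · refine ⟨_, Or.inl ⟨vz1 n, v, vy n i, vz2 n,
            ⟨by simp only [vz1_val]; omega, by simp only [vx_val, vz1_val, vz2_val, vy_val]; omega⟩, ⟨by simp only [vx_val, vz1_val, vz2_val, vy_val]; omega, by simp only [vx_val, vz1_val, vz2_val, vy_val]; omega⟩, rfl⟩, ?_⟩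
          rw [Finsupp.le_def]; intro w
          simp only [Finsupp.coe_add, Pi.add_apply, sgl, dmi]
          have B0 := sval (vx n) w; have B1 := sval (vz1 n) w; have B2 := sval (vz2 n) w
          have Bv := sval v w; have By := sval (vy n i) w
          simp only [vx_val, vz1_val, vz2_val, vy_val] at B0 B1 B2 By
          omega
  · intro u g hg hle
    by_contra hcon
    push_neg at hcon
    simp only [Set.mem_setOf_eq] at hcon
    rw [Finsupp.le_def] at hle
    rcases hg with ⟨a, b, c, e, ⟨ha, hab⟩, ⟨hc, hce⟩, rfl⟩ | ⟨l, hl, rfl⟩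
    · have Ha := hle a; have Hb := hle b; have Hc := hle c; have He := hle e
      simp only [Finsupp.coe_add, Pi.add_apply, sgl, dmi] at Ha Hb Hc He
      have ua : u a = 0 := hcon a (by omega)
      have ub : u b = 0 := hcon b (by omega)
      have uc : u c = 0 := hcon c (by omega)
      have ue : u e = 0 := hcon e (by omega)
      have f1 := sval a a; have f2 := sval b a; have f3 := sval c a; have f4 := sval e a
      have f5 := sval (vx n) a; have f6 := sval (vz1 n) a; have f7 := sval (vz2 n) a
      have f8 := sval (vy n i) a
      have g1 := sval a b; have g2 := sval b b; have g3 := sval c b; have g4 := sval e b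
      have g5 := sval (vx n) b; have g6 := sval (vz1 n) b; have g7 := sval (vz2 n) b
      have g8 := sval (vy n i) b
      have k1 := sval a c; have k2 := sval b c; have k3 := sval c c; have k4 := sval e c
      have k5 := sval (vx n) c; have k6 := sval (vz1 n) c; have k7 := sval (vz2 n) c
      have k8 := sval (vy n i) c
      have m1 := sval a e; have m2 := sval b e; have m3 := sval c e; have m4 := sval e e
      have m5 := sval (vx n) e; have m6 := sval (vz1 n) e; have m7 := sval (vz2 n) e
      have m8 := sval (vy n i) e
      simp only [vx_val, vz1_val, vz2_val, vy_val] at f5 f6 f7 f8 g5 g6 g7 g8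
      simp only [vx_val, vz1_val, vz2_val, vy_val] at k5 k6 k7 k8 m5 m6 m7 m8
      omega
    · have hl' : (l:ℕ) < (i:ℕ) := hl
      have Hl := hle (vy n l)
      simp only [Finsupp.coe_add, Pi.add_apply, sgl, dmi] at Hl
      have ul : u (vy n l) = 0 := hcon (vy n l) (by simp only [vy_val]; omega)
      have B0 := sval (vx n) (vy n l); have B1 := sval (vz1 n) (vy n l)
      have B2 := sval (vz2 n) (vy n l); have By := sval (vy n i) (vy n l)
      have hBl := (sval (vy n l) (vy n l)).1 rfl
      simp only [vx_val, vz1_val, vz2_val, vy_val] at B0 B1 B2 By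
      omega

lemma main_top {K : Type*} [Field K] {n : ℕ} (hn : 2 ≤ n) (i : Fin n) (hi : (i:ℕ) = n - 1) :
    (Ideal.span ((fun d => monomial d (1:K)) '' Tset n i)).colon
      ((Ideal.span {monomial (dmi n i) (1:K)} : Ideal (MvPolynomial (Fin (n+3)) K)) : Set (MvPolynomial (Fin (n+3)) K)) =
    Ideal.span (X '' {v : Fin (n+3) | 1 ≤ (v:ℕ) ∧ (v:ℕ) ≤ n}) := by
  apply colon_monomial_span
  · intro v hv
    simp only [Set.mem_setOf_eq] at hv
    obtain ⟨hv1, hv2⟩ := hv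
    by_cases hve : (v:ℕ) = 1
    · refine ⟨_, Or.inl ⟨vz1 n, vy n i, vz1 n, vz2 n,
        ⟨by simp only [vz1_val]; omega, by simp only [vx_val, vz1_val, vz2_val, vy_val]; omega⟩, ⟨by simp only [vz1_val]; omega, by simp only [vx_val, vz1_val, vz2_val, vy_val]; omega⟩, rfl⟩, ?_⟩
      rw [Finsupp.le_def]; intro w
      simp only [Finsupp.coe_add, Pi.add_apply, sgl, dmi]
      have B0 := sval (vx n) w; have B1 := sval (vz1 n) w; have B2 := sval (vz2 n) w
      have Bv := sval v w; have By := sval (vy n i) w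
      simp only [vx_val, vz1_val, vz2_val, vy_val] at B0 B1 B2 By
      omega
    · obtain ⟨l, hlv⟩ : ∃ l : Fin n, (l:ℕ) = (v:ℕ) - 2 := ⟨⟨(v:ℕ)-2, by omega⟩, rfl⟩
      refine ⟨_, Or.inr ⟨l, by rw [Fin.lt_def]; omega, rfl⟩, ?_⟩
      rw [Finsupp.le_def]; intro w
      simp only [Finsupp.coe_add, Pi.add_apply, sgl, dmi]
      have B0 := sval (vx n) w; have B1 := sval (vz1 n) w; have B2 := sval (vz2 n) w
      have Bv := sval v w; have By := sval (vy n i) w; have Bl := sval (vy n l) w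
      simp only [vx_val, vz1_val, vz2_val, vy_val] at B0 B1 B2 By Bl
      omega
  · intro u g hg hle
    by_contra hcon
    push_neg at hcon
    simp only [Set.mem_setOf_eq] at hcon
    rw [Finsupp.le_def] at hle
    rcases hg with ⟨a, b, c, e, ⟨ha, hab⟩, ⟨hc, hce⟩, rfl⟩ | ⟨l, hl, rfl⟩
    · have Ha := hle a; have Hc := hle c
      simp only [Finsupp.coe_add, Pi.add_apply, sgl, dmi] at Ha Hc
      have ua : u a = 0 := hcon a ⟨by omega, by omega⟩
      have uc : u c = 0 := hcon c ⟨by omega, by omega⟩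
      have f1 := sval a a; have f2 := sval b a; have f3 := sval c a; have f4 := sval e a
      have f5 := sval (vx n) a; have f6 := sval (vz1 n) a; have f7 := sval (vz2 n) a
      have f8 := sval (vy n i) a
      have k1 := sval a c; have k2 := sval b c; have k3 := sval c c; have k4 := sval e c
      have k5 := sval (vx n) c; have k6 := sval (vz1 n) c; have k7 := sval (vz2 n) c
      have k8 := sval (vy n i) c
      simp only [vx_val, vz1_val, vz2_val, vy_val] at f5 f6 f7 f8 k5 k6 k7 k8
      omega
    · have hl' : (l:ℕ) < (i:ℕ) := hl
      have Hl := hle (vy n l)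
      simp only [Finsupp.coe_add, Pi.add_apply, sgl, dmi] at Hl
      have ul : u (vy n l) = 0 := hcon (vy n l) ⟨by simp only [vy_val]; omega, by simp only [vy_val]; omega⟩
      have B0 := sval (vx n) (vy n l); have B1 := sval (vz1 n) (vy n l)
      have B2 := sval (vz2 n) (vy n l); have By := sval (vy n i) (vy n l)
      have hBl := (sval (vy n l) (vy n l)).1 rfl
      simp only [vx_val, vz1_val, vz2_val, vy_val] at B0 B1 B2 By
      omega
lemma hset0 {K : Type*} [Field K] {n : ℕ} (hn : 2 ≤ n) :
    (X '' {v : Fin (n+3) | 3 ≤ (v:ℕ)} : Set (MvPolynomial (Fin (n+3)) K)) =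
    ({X (vz2 n)} ∪ { m | ∃ l : Fin n, 0 < (l : ℕ) ∧ m = X (vy n l) }) := by
  ext m
  constructor
  · rintro ⟨v, hv, rfl⟩
    simp only [Set.mem_setOf_eq] at hv
    have hvlt := v.isLt
    by_cases h2 : (v:ℕ) = n+2
    · exact Or.inl (congrArg X (Fin.ext (show (v:ℕ) = (n:ℕ)+2 from h2)))
    · refine Or.inr ⟨⟨(v:ℕ)-2, by omega⟩, by simpa using by omega, ?_⟩
      exact congrArg X (Fin.ext (show (v:ℕ) = (v:ℕ)-2+2 by omega)).symm |>.symm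
  · rintro (h | ⟨l, hl, rfl⟩)
    · exact ⟨vz2 n, by simp only [Set.mem_setOf_eq, vz2_val]; omega, h.symm ▸ rfl⟩
    · exact ⟨vy n l, by simp only [Set.mem_setOf_eq, vy_val]; omega, rfl⟩

lemma hsetmid {K : Type*} [Field K] {n : ℕ} (hn : 2 ≤ n) :
    (X '' {v : Fin (n+3) | 1 ≤ (v:ℕ)} : Set (MvPolynomial (Fin (n+3)) K)) =
    ({X (vz1 n), X (vz2 n)} ∪ Set.range fun l : Fin n => X (vy n l)) := by
  ext m
  constructor
  · rintro ⟨v, hv, rfl⟩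
    simp only [Set.mem_setOf_eq] at hv
    have hvlt := v.isLt
    by_cases h1 : (v:ℕ) = 1
    · exact Or.inl (Or.inl (congrArg X (Fin.ext (show (v:ℕ) = 1 from h1))))
    · by_cases h2 : (v:ℕ) = n+2
      · exact Or.inl (Or.inr (congrArg X (Fin.ext (show (v:ℕ) = (n:ℕ)+2 from h2))))
      · exact Or.inr ⟨⟨(v:ℕ)-2, by omega⟩,
          (congrArg X (Fin.ext (show (v:ℕ) = (v:ℕ)-2+2 by omega))).symm⟩
  · rintro ((h | h) | ⟨l, rfl⟩)
    · exact ⟨vz1 n, by simp only [Set.mem_setOf_eq, vz1_val]; omega, h.symm ▸ rfl⟩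
    · exact ⟨vz2 n, by simp only [Set.mem_setOf_eq, vz2_val]; omega, h.symm ▸ rfl⟩
    · exact ⟨vy n l, by simp only [Set.mem_setOf_eq, vy_val]; omega, rfl⟩

lemma hsettop {K : Type*} [Field K] {n : ℕ} (hn : 2 ≤ n) :
    (X '' {v : Fin (n+3) | 1 ≤ (v:ℕ) ∧ (v:ℕ) ≤ n} : Set (MvPolynomial (Fin (n+3)) K)) =
    ({X (vz1 n)} ∪ { m | ∃ l : Fin n, (l : ℕ) < n - 1 ∧ m = X (vy n l) }) := by
  ext m
  constructor
  · rintro ⟨v, ⟨hv1, hv2⟩, rfl⟩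
    by_cases h1 : (v:ℕ) = 1
    · exact Or.inl (congrArg X (Fin.ext (show (v:ℕ) = 1 from h1)))
    · refine Or.inr ⟨⟨(v:ℕ)-2, by omega⟩, by simpa using by omega, ?_⟩
      exact (congrArg X (Fin.ext (show (v:ℕ) = (v:ℕ)-2+2 by omega)))
  · rintro (h | ⟨l, hl, rfl⟩)
    · exact ⟨vz1 n, by simp only [Set.mem_setOf_eq, vz1_val]; omega, h.symm ▸ rfl⟩
    · exact ⟨vy n l, by simp only [Set.mem_setOf_eq, vy_val]; omega, rfl⟩


/-- For each `1 ≤ i ≤ n`, the colon ideal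
`(J² + (x z₁ z₂ y_l : l < i)) : (x z₁ z₂ y_i)` is generated by a subset of the variables;
explicitly it is `(y₂,…,y_n,z₂)` for `i = 1`, `(z₁,z₂,y₁,…,y_n)` for `1 < i < n`, and
`(y₁,…,y_{n-1},z₁)` for `i = n`.  (Here `i : Fin n` is 0-indexed: `i = 0` is the paper's
`i = 1` and `i = n - 1` is the paper's `i = n`.) -/
theorem stage2a_colon (K : Type*) [Field K] (n : ℕ) (hn : 2 ≤ n) (i : Fin n) :
    ∀ Q : Ideal (MvPolynomial (Fin (n + 3)) K),
      Q = (Jideal K n ^ 2 +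
            Ideal.span { m | ∃ l : Fin n, l < i ∧
              m = X (vx n) * X (vz1 n) * X (vz2 n) * X (vy n l) }).colon
          ((Ideal.span {X (vx n) * X (vz1 n) * X (vz2 n) * X (vy n i)} :
              Ideal (MvPolynomial (Fin (n + 3)) K)) : Set (MvPolynomial (Fin (n + 3)) K)) →
      (∃ S : Set (Fin (n + 3)), Q = Ideal.span (MvPolynomial.X '' S)) ∧
      ((i : ℕ) = 0 →
        Q = Ideal.span ({X (vz2 n)} ∪
              { m | ∃ l : Fin n, 0 < (l : ℕ) ∧ m = X (vy n l) })) ∧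
      (0 < (i : ℕ) ∧ (i : ℕ) < n - 1 →
        Q = Ideal.span ({X (vz1 n), X (vz2 n)} ∪
              Set.range fun l : Fin n => X (vy n l))) ∧
      ((i : ℕ) = n - 1 →
        Q = Ideal.span ({X (vz1 n)} ∪
              { m | ∃ l : Fin n, (l : ℕ) < n - 1 ∧ m = X (vy n l) })) := by
  intro Q hQ
  subst hQ
  rw [Ieq K n i]
  have hdiv : (Ideal.span {X (vx n) * X (vz1 n) * X (vz2 n) * X (vy n i)} :
      Ideal (MvPolynomial (Fin (n+3)) K)) = Ideal.span {monomial (dmi n i) 1} := by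
    rw [X4mon (n := n)]; rfl
  rw [hdiv]
  have hilt := i.isLt
  by_cases hi0 : (i:ℕ) = 0
  · have key := main0 (K := K) hn i hi0
    rw [key, hset0 hn]
    exact ⟨⟨_, congrArg Ideal.span (hset0 hn).symm⟩, fun _ => rfl, fun h => absurd h (by omega),
      fun h => absurd h (by omega)⟩
  · by_cases hitop : (i:ℕ) = n - 1
    · have key := main_top (K := K) hn i hitop
      rw [key, hsettop hn]
      exact ⟨⟨_, congrArg Ideal.span (hsettop hn).symm⟩, fun h => absurd h (by omega),
        fun h => absurd h (by omega), fun _ => rfl⟩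
    · have key := main_mid (K := K) hn i ⟨by omega, by omega⟩
      rw [key, hsetmid hn]
      exact ⟨⟨_, congrArg Ideal.span (hsetmid hn).symm⟩, fun h => absurd h (by omega), fun _ => rfl,
        fun h => absurd h (by omega)⟩
end
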